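/- arXiv:1104.3349 — 3 statements merged into one kernel-verified Lean document; each statement's English description precedes it below -/
import Mathlib

section
/- Let C = [[D, E], [F, G]] be a block 2×2 matrix with D invertible p×p, and let Ŝ be any invertible q×q matrix. Define the preconditioner B = [[D, 0], [F, Ŝ]] · [[D⁻¹, 0], [0, Ŝ⁻¹]] · [[D, E], [0, Ŝ]]. Then B⁻¹ C = [[I_p, D⁻¹ E (I - Ŝ⁻¹ S)], [0, Ŝ⁻¹ S]], where S = G - F D⁻¹ E. -/
open Matrix

theorem mscn_left_preconditioned {p q : ℕ}
    (D : Matrix (Fin p) (Fin p) ℝ) (E : Matrix (Fin p) (Fin q) ℝ)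
    (F : Matrix (Fin q) (Fin p) ℝ) (G : Matrix (Fin q) (Fin q) ℝ)
    (Shat : Matrix (Fin q) (Fin q) ℝ)
    (hD : IsUnit D.det) (hShat : IsUnit Shat.det)
    (C : Matrix (Fin p ⊕ Fin q) (Fin p ⊕ Fin q) ℝ) (hC : C = fromBlocks D E F G)
    (B : Matrix (Fin p ⊕ Fin q) (Fin p ⊕ Fin q) ℝ)
    (hB : B = fromBlocks D 0 F Shat * fromBlocks D⁻¹ 0 0 Shat⁻¹ * fromBlocks D E 0 Shat)
    (S : Matrix (Fin q) (Fin q) ℝ) (hSdef : S = G - F * D⁻¹ * E) :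
    B⁻¹ * C = fromBlocks 1 (D⁻¹ * E * (1 - Shat⁻¹ * S)) 0 (Shat⁻¹ * S) := by
  have hDD : D * D⁻¹ = 1 := mul_nonsing_inv D hD
  have hDD' : D⁻¹ * D = 1 := nonsing_inv_mul D hD
  have hSS : Shat * Shat⁻¹ = 1 := mul_nonsing_inv Shat hShat
  have hB' : B = fromBlocks D E F (F * D⁻¹ * E + Shat) := by
    rw [hB]
    simp [fromBlocks_multiply, hDD, hSS, Matrix.mul_assoc, hDD']
  have hBdet : IsUnit B.det := by
    haveI := D.invertibleOfIsUnitDet hD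
    rw [hB', det_fromBlocks₁₁]
    have : F * D⁻¹ * E + Shat - F * ⅟D * E = Shat := by
      rw [invOf_eq_nonsing_inv]; abel
    rw [this]
    exact hD.mul hShat
  have t2 : D * (D⁻¹ * E * (1 - Shat⁻¹ * S)) + E * (Shat⁻¹ * S) = E := by
    have hd : D * (D⁻¹ * E * (1 - Shat⁻¹ * S)) = E * (1 - Shat⁻¹ * S) := by
      rw [← Matrix.mul_assoc, ← Matrix.mul_assoc, hDD, Matrix.one_mul]
    rw [hd, Matrix.mul_sub, Matrix.mul_one]; abel
  have t4 : F * (D⁻¹ * E * (1 - Shat⁻¹ * S)) + (F * D⁻¹ * E + Shat) * (Shat⁻¹ * S) = G := by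
    have hs : Shat * (Shat⁻¹ * S) = S := by
      rw [← Matrix.mul_assoc, hSS, Matrix.one_mul]
    have h1 : D⁻¹ * E * (1 - Shat⁻¹ * S) = D⁻¹ * E - D⁻¹ * E * (Shat⁻¹ * S) := by
      rw [Matrix.mul_sub, Matrix.mul_one]
    rw [Matrix.add_mul, hs, h1, Matrix.mul_sub, ← Matrix.mul_assoc F D⁻¹ E,
      ← Matrix.mul_assoc F (D⁻¹ * E) (Shat⁻¹ * S), ← Matrix.mul_assoc F D⁻¹ E, hSdef]
    abel
  have hkey : B * fromBlocks 1 (D⁻¹ * E * (1 - Shat⁻¹ * S)) 0 (Shat⁻¹ * S) = C := by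
    rw [hB', hC, fromBlocks_multiply]
    simp only [Matrix.mul_one, Matrix.mul_zero, Matrix.mul_zero, add_zero, t2, t4]
  rw [← hkey, ← Matrix.mul_assoc, nonsing_inv_mul B hBdet, Matrix.one_mul]
end

section
/- With the same setup, the right-preconditioned matrix satisfies C B⁻¹ = [[I_p, 0], [(I - S Ŝ⁻¹) F D⁻¹, S Ŝ⁻¹]], where S = G - F D⁻¹ E. -/
open Matrix

theorem mscn_right_preconditioned {p q : ℕ}
    (D : Matrix (Fin p) (Fin p) ℝ) (E : Matrix (Fin p) (Fin q) ℝ)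
    (F : Matrix (Fin q) (Fin p) ℝ) (G : Matrix (Fin q) (Fin q) ℝ)
    (Shat : Matrix (Fin q) (Fin q) ℝ)
    (hD : IsUnit D.det) (hShat : IsUnit Shat.det)
    (C : Matrix (Fin p ⊕ Fin q) (Fin p ⊕ Fin q) ℝ) (hC : C = fromBlocks D E F G)
    (B : Matrix (Fin p ⊕ Fin q) (Fin p ⊕ Fin q) ℝ)
    (hB : B = fromBlocks D 0 F Shat * fromBlocks D⁻¹ 0 0 Shat⁻¹ * fromBlocks D E 0 Shat)
    (S : Matrix (Fin q) (Fin q) ℝ) (hSdef : S = G - F * D⁻¹ * E) :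
    C * B⁻¹ = fromBlocks 1 0 ((1 - S * Shat⁻¹) * F * D⁻¹) (S * Shat⁻¹) := by
  have hDi : IsUnit D⁻¹.det := D.isUnit_nonsing_inv_det hD
  have hSi : IsUnit Shat⁻¹.det := Shat.isUnit_nonsing_inv_det hShat
  have hBdet : IsUnit B.det := by
    rw [hB, det_mul, det_mul, det_fromBlocks_zero₁₂, det_fromBlocks_zero₂₁,
      det_fromBlocks_zero₂₁]
    exact (((hD.mul hShat).mul (hDi.mul hSi)).mul (hD.mul hShat))
  haveI := B.invertibleOfIsUnitDet hBdet
  rw [Matrix.mul_inv_eq_iff_eq_mul_of_invertible, hB, hC,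
    ← Matrix.mul_assoc]
  simp only [fromBlocks_multiply, Matrix.mul_one, Matrix.one_mul, Matrix.zero_mul,
    Matrix.mul_zero, add_zero, zero_add, Matrix.mul_nonsing_inv _ hD,
    Matrix.mul_nonsing_inv _ hShat]
  have h1 : (1 - S * Shat⁻¹) * F * D⁻¹ + S * Shat⁻¹ * (F * D⁻¹) = F * D⁻¹ := by
    rw [Matrix.sub_mul, Matrix.sub_mul, Matrix.one_mul, Matrix.mul_assoc (S * Shat⁻¹),
      sub_add_cancel]
  rw [h1, Matrix.mul_assoc F, Matrix.nonsing_inv_mul _ hD, Matrix.mul_one,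
    Matrix.mul_assoc S, Matrix.nonsing_inv_mul _ hShat, Matrix.mul_one, hSdef,
    Matrix.mul_assoc F, add_sub_cancel]
end

section
/- Let C = [[D, E], [F, G]] with D invertible p×p, Ŝ invertible, S = G - F D⁻¹ E, and B the block LDU preconditioner built from D and Ŝ. Then the characteristic polynomial of B⁻¹C equals (x - 1)^p times the characteristic polynomial of Ŝ⁻¹ S. In particular, the eigenvalues of B⁻¹C are 1 (with multiplicity at least p) together with the eigenvalues of Ŝ⁻¹ S. -/
open Matrix Polynomial

theorem mscn_charpoly {p q : ℕ}
    (D : Matrix (Fin p) (Fin p) ℂ) (E : Matrix (Fin p) (Fin q) ℂ)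
    (F : Matrix (Fin q) (Fin p) ℂ) (G : Matrix (Fin q) (Fin q) ℂ)
    (Shat : Matrix (Fin q) (Fin q) ℂ)
    (hD : IsUnit D.det) (hShat : IsUnit Shat.det)
    (C : Matrix (Fin p ⊕ Fin q) (Fin p ⊕ Fin q) ℂ) (hC : C = fromBlocks D E F G)
    (B : Matrix (Fin p ⊕ Fin q) (Fin p ⊕ Fin q) ℂ)
    (hB : B = fromBlocks D 0 F Shat * fromBlocks D⁻¹ 0 0 Shat⁻¹ * fromBlocks D E 0 Shat)
    (S : Matrix (Fin q) (Fin q) ℂ) (hSdef : S = G - F * D⁻¹ * E) :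
    (B⁻¹ * C).charpoly = (X - 1) ^ p * (Shat⁻¹ * S).charpoly := by
  have hDu : IsUnit D := (Matrix.isUnit_iff_isUnit_det D).mpr hD
  have hSu : IsUnit Shat := (Matrix.isUnit_iff_isUnit_det Shat).mpr hShat
  have hDiu : IsUnit (D⁻¹) := Matrix.isUnit_nonsing_inv_iff.mpr hDu
  have hSiu : IsUnit (Shat⁻¹) := Matrix.isUnit_nonsing_inv_iff.mpr hSu
  have hDD : D⁻¹ * D = 1 := Matrix.nonsing_inv_mul D hD
  have hDD' : D * D⁻¹ = 1 := Matrix.mul_nonsing_inv D hD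
  have hSS : Shat * Shat⁻¹ = 1 := Matrix.mul_nonsing_inv Shat hShat
  have hSS' : Shat⁻¹ * Shat = 1 := Matrix.nonsing_inv_mul Shat hShat
  have hScanc : ∀ {m : Type} (M : Matrix (Fin q) m ℂ), Shat⁻¹ * (Shat * M) = M := fun M => by
    rw [← Matrix.mul_assoc, hSS', Matrix.one_mul]
  have key : B⁻¹ * C =
      fromBlocks 1 (D⁻¹ * E - D⁻¹ * E * (Shat⁻¹ * S)) 0 (Shat⁻¹ * S) := by
    subst hB hC hSdef
    rw [Matrix.mul_inv_rev, Matrix.mul_inv_rev,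
      inv_fromBlocks_zero₂₁_of_isUnit_iff _ _ _ (iff_of_true hDu hSu),
      inv_fromBlocks_zero₁₂_of_isUnit_iff _ _ _ (iff_of_true hDu hSu),
      inv_fromBlocks_zero₂₁_of_isUnit_iff _ _ _ (iff_of_true hDiu hSiu),
      Matrix.nonsing_inv_nonsing_inv D hD, Matrix.nonsing_inv_nonsing_inv Shat hShat]
    simp only [Matrix.fromBlocks_multiply]
    refine Matrix.fromBlocks_inj.mpr ⟨?_, ?_, ?_, ?_⟩ <;>
      simp only [Matrix.mul_zero, Matrix.zero_mul, Matrix.mul_one, Matrix.one_mul,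
        add_zero, zero_add, Matrix.neg_mul, Matrix.mul_neg, neg_neg, Matrix.add_mul,
        Matrix.mul_sub, Matrix.sub_mul, Matrix.mul_assoc, hDD, hDD', hSS, hSS', hScanc,
        Matrix.mul_one, Matrix.one_mul] <;>
      abel
  rw [key, Matrix.charpoly_fromBlocks_zero₂₁]
  congr 1
  unfold Matrix.charpoly Matrix.charmatrix
  rw [RingHom.map_one, scalar_apply, ← Matrix.diagonal_one, diagonal_sub, Matrix.det_diagonal]
  simp [Finset.prod_const]
end
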